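/- Let X be a real-valued random variable, a ∈ ℝ, B(x) := sign(x - a), and suppose E|X| < ∞ and α := E[|X - a|] > 0. Define p(t) := (1/α) E[ B(X) (1_{a ≤ t ≤ X} - 1_{X < t < a}) ]. Then p is a probability density function on ℝ, i.e. p ≥ 0 and ∫_ℝ p(t) dt = 1. -/

import Mathlib

open MeasureTheory

/-- If `X` is an integrable real random variable with `α := E|X - a| > 0` and
`B(x) = sign(x - a)`, then `p(t) = α⁻¹ E[B(X)(1_{a ≤ t ≤ X} - 1_{X < t < a})]`
is a probability density on `ℝ`. -/
theorem stmt_12 {Ω : Type*} [MeasurableSpace Ω] (P : Measure Ω) [IsProbabilityMeasure P]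
    (X : Ω → ℝ) (hX_meas : Measurable X) (hX_int : Integrable X P) (a : ℝ)
    (hα : 0 < ∫ ω, |X ω - a| ∂P) :
    have α : ℝ := ∫ ω, |X ω - a| ∂P
    have p : ℝ → ℝ := fun t => (1 / α) *
      ∫ ω, Real.sign (X ω - a) *
        ((if a ≤ t ∧ t ≤ X ω then (1 : ℝ) else 0) -
          (if X ω < t ∧ t < a then (1 : ℝ) else 0)) ∂P
    (∀ t : ℝ, 0 ≤ p t) ∧ ∫ t : ℝ, p t = 1 := by
  intro α p
  set f : ℝ → Ω → ℝ := fun t ω =>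
    (if a ≤ t ∧ t ≤ X ω ∧ a < X ω then (1 : ℝ) else 0) +
    (if X ω < t ∧ t < a then (1 : ℝ) else 0) with hf
  have hEq : ∀ (t : ℝ) (ω : Ω),
      Real.sign (X ω - a) *
        ((if a ≤ t ∧ t ≤ X ω then (1 : ℝ) else 0) -
          (if X ω < t ∧ t < a then (1 : ℝ) else 0)) = f t ω := by
    intro t ω
    rcases lt_trichotomy (X ω) a with h | h | h
    · have hC1 : ¬(a ≤ t ∧ t ≤ X ω) := fun ⟨h1, h2⟩ => absurd (h1.trans h2) (not_le.2 h)
      have hC3 : ¬(a ≤ t ∧ t ≤ X ω ∧ a < X ω) := fun ⟨_, _, h3⟩ => absurd h3 (not_lt.2 h.le)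
      rw [Real.sign_of_neg (by linarith : X ω - a < 0)]
      simp only [hf]
      rw [if_neg hC1, if_neg hC3]
      split_ifs <;> ring
    · have hC2 : ¬(X ω < t ∧ t < a) := fun ⟨h1, h2⟩ => absurd (h1.trans h2) (by simp [h])
      have hC3 : ¬(a ≤ t ∧ t ≤ X ω ∧ a < X ω) := fun ⟨_, _, h3⟩ => absurd h3 (by simp [h])
      simp only [hf]
      rw [if_neg hC2, if_neg hC3, h, sub_self, Real.sign_zero]
      ring
    · have hC2 : ¬(X ω < t ∧ t < a) := fun ⟨h1, h2⟩ => absurd (h.trans h1) (not_lt.2 h2.le)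
      rw [Real.sign_of_pos (by linarith : 0 < X ω - a)]
      simp only [hf]
      rw [if_neg hC2]
      split_ifs with h1 h2 h2
      · ring
      · exact absurd ⟨h1.1, h1.2, h⟩ h2
      · exact absurd ⟨h2.1, h2.2.1⟩ h1
      · ring
  have hnonneg : ∀ (t : ℝ) (ω : Ω), 0 ≤ f t ω := by
    intro t ω
    have : ∀ (c : Prop) [Decidable c], (0:ℝ) ≤ if c then 1 else 0 := by
      intro c _; split <;> norm_num
    exact add_nonneg (this _) (this _)
  have hαpos : (0:ℝ) < α := hα
  -- slice integrability and integral
  have hIccEq : ∀ ω, a < X ω →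
      (fun t => f t ω) = Set.indicator (Set.Icc a (X ω)) (fun _ => (1:ℝ)) := by
    intro ω hω
    funext t
    have hC2 : ¬(X ω < t ∧ t < a) := fun ⟨h1, h2⟩ => absurd (hω.trans h1) (not_lt.2 h2.le)
    simp only [hf, Set.indicator_apply, Set.mem_Icc]
    rw [if_neg hC2, add_zero]
    split_ifs with h1 h2 h2
    · rfl
    · exact absurd ⟨h1.1, h1.2.1⟩ h2
    · exact absurd ⟨h2.1, h2.2, hω⟩ h1
    · rfl
  have hIooEq : ∀ ω, ¬ a < X ω →
      (fun t => f t ω) = Set.indicator (Set.Ioo (X ω) a) (fun _ => (1:ℝ)) := by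
    intro ω hω
    funext t
    have hC3 : ¬(a ≤ t ∧ t ≤ X ω ∧ a < X ω) := fun ⟨_, _, h3⟩ => hω h3
    simp only [hf, Set.indicator_apply, Set.mem_Ioo]
    rw [if_neg hC3, zero_add]
  have hslice_int : ∀ ω, Integrable (fun t => f t ω) (volume : Measure ℝ) := by
    intro ω
    by_cases hω : a < X ω
    · rw [hIccEq ω hω]
      exact (integrable_indicator_iff measurableSet_Icc).2
        (integrableOn_const (by simp [Real.volume_Icc, ENNReal.ofReal_lt_top]))
    · rw [hIooEq ω hω]
      exact (integrable_indicator_iff measurableSet_Ioo).2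
        (integrableOn_const (by simp [Real.volume_Ioo, ENNReal.ofReal_lt_top]))
  have hslice_val : ∀ ω, ∫ t, f t ω = |X ω - a| := by
    intro ω
    by_cases hω : a < X ω
    · rw [hIccEq ω hω]
      rw [MeasureTheory.integral_indicator measurableSet_Icc]
      simp [hω.le, Real.volume_Icc, ENNReal.toReal_ofReal (by linarith : (0:ℝ) ≤ X ω - a),
        abs_of_pos (by linarith : (0:ℝ) < X ω - a)]
    · rw [hIooEq ω hω]
      rw [MeasureTheory.integral_indicator measurableSet_Ioo]
      rcases lt_or_eq_of_le (not_lt.1 hω) with h | h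
      · simp [h.le, Real.volume_Ioo, ENNReal.toReal_ofReal (by linarith : (0:ℝ) ≤ a - X ω),
          abs_of_neg (by linarith : X ω - a < 0)]
      · simp [h]
  -- measurability on the product
  have hmeas : Measurable (fun q : ℝ × Ω => f q.1 q.2) := by
    have m1 : MeasurableSet {q : ℝ × Ω | a ≤ q.1 ∧ q.1 ≤ X q.2 ∧ a < X q.2} := by
      refine MeasurableSet.inter ?_ (MeasurableSet.inter ?_ ?_)
      · exact measurableSet_le measurable_const measurable_fst
      · exact measurableSet_le measurable_fst (hX_meas.comp measurable_snd)
      · exact measurableSet_lt measurable_const (hX_meas.comp measurable_snd)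
    have m2 : MeasurableSet {q : ℝ × Ω | X q.2 < q.1 ∧ q.1 < a} := by
      refine MeasurableSet.inter ?_ ?_
      · exact measurableSet_lt (hX_meas.comp measurable_snd) measurable_fst
      · exact measurableSet_lt measurable_fst measurable_const
    have : (fun q : ℝ × Ω => f q.1 q.2) =
        (Set.indicator {q : ℝ × Ω | a ≤ q.1 ∧ q.1 ≤ X q.2 ∧ a < X q.2} (fun _ => (1:ℝ))) +
        (Set.indicator {q : ℝ × Ω | X q.2 < q.1 ∧ q.1 < a} (fun _ => (1:ℝ))) := by
      funext q
      simp [hf, Set.indicator_apply]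
    rw [this]
    exact ((measurable_const.indicator m1)).add (measurable_const.indicator m2)
  have hprod_int : Integrable (fun q : ℝ × Ω => f q.1 q.2) (volume.prod P) := by
    rw [integrable_prod_iff' hmeas.aestronglyMeasurable]
    constructor
    · exact Filter.Eventually.of_forall fun ω => hslice_int ω
    · have : (fun ω => ∫ t, ‖f t ω‖) = fun ω => |X ω - a| := by
        funext ω
        rw [← hslice_val ω]
        congr 1
        funext t
        exact Real.norm_of_nonneg (hnonneg t ω)
      rw [this]
      exact (hX_int.sub (integrable_const a)).abs
  have hswap : ∫ t, ∫ ω, f t ω ∂P = ∫ ω, (∫ t, f t ω) ∂P :=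
    integral_integral_swap hprod_int
  have hrw : ∀ t, (∫ ω, Real.sign (X ω - a) *
        ((if a ≤ t ∧ t ≤ X ω then (1 : ℝ) else 0) -
          (if X ω < t ∧ t < a then (1 : ℝ) else 0)) ∂P) = ∫ ω, f t ω ∂P := by
    intro t
    exact integral_congr_ae (Filter.Eventually.of_forall fun ω => hEq t ω)
  constructor
  · intro t
    show 0 ≤ (1 / α) * _
    rw [hrw t]
    exact mul_nonneg (by positivity) (integral_nonneg fun ω => hnonneg t ω)
  · show (∫ t : ℝ, (1 / α) * _) = 1
    simp_rw [hrw]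
    rw [integral_const_mul, hswap]
    have : (∫ ω, (∫ t, f t ω) ∂P) = α := by
      rw [show (fun ω => ∫ t, f t ω) = fun ω => |X ω - a| from funext hslice_val]
    rw [this]
    field_simp
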